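/- Let Q be a finite abelian group and R a finite ring of endomorphisms of Q (a subring of End(Q)). If Q is subdirectly irreducible as an R-module (i.e., Q has a smallest nonzero R-submodule), then |Q| ≤ |R|. -/

import Mathlib

/-- A purely functional first-order signature. -/
structure Signature where
  ops : Type
  arity : ops → ℕ

/-- An algebra for a signature: an interpretation of each operation symbol. -/
structure UAlg (σ : Signature) (A : Type) where
  interp : ∀ o : σ.ops, (Fin (σ.arity o) → A) → A

/-- Terms in `n` variables over a signature. -/
inductive Term (σ : Signature) (n : ℕ) : Type
  | var : Fin n → Term σ n
  | op : (o : σ.ops) → (Fin (σ.arity o) → Term σ n) → Term σ n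

/-- Evaluation of a term at a tuple. -/
def Term.eval {σ : Signature} {A : Type} (Alg : UAlg σ A) {n : ℕ} :
    Term σ n → (Fin n → A) → A
  | .var i, v => v i
  | .op o ts, v => Alg.interp o fun j => (ts j).eval Alg v

/-- A congruence: an equivalence relation compatible with all operations. -/
def IsCongruence {σ : Signature} {A : Type} (Alg : UAlg σ A) (r : A → A → Prop) : Prop :=
  Equivalence r ∧ ∀ (o : σ.ops) (x y : Fin (σ.arity o) → A),
    (∀ i, r (x i) (y i)) → r (Alg.interp o x) (Alg.interp o y)

/-- A `k`-ary polynomial operation: a term operation with parameters. -/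
def IsPolynomial {σ : Signature} {A : Type} (Alg : UAlg σ A) {k : ℕ}
    (f : (Fin k → A) → A) : Prop :=
  ∃ (n : ℕ) (t : Term σ (k + n)) (params : Fin n → A),
    ∀ x : Fin k → A, f x = t.eval Alg (Fin.append x params)

/-- A unary polynomial operation. -/
def IsUnaryPolynomial {σ : Signature} {A : Type} (Alg : UAlg σ A) (f : A → A) : Prop :=
  IsPolynomial Alg (k := 1) fun x => f (x 0)

/-- The term condition TermCond(α, β; γ). -/
def TermCond {σ : Signature} {A : Type} (Alg : UAlg σ A) (α β γ : A → A → Prop) : Prop :=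
  ∀ (n m : ℕ) (t : Term σ (n + m)) (a₁ a₂ : Fin n → A) (b₁ b₂ : Fin m → A),
    (∀ i, α (a₁ i) (a₂ i)) → (∀ i, β (b₁ i) (b₂ i)) →
    γ (t.eval Alg (Fin.append a₁ b₁)) (t.eval Alg (Fin.append a₁ b₂)) →
    γ (t.eval Alg (Fin.append a₂ b₁)) (t.eval Alg (Fin.append a₂ b₂))

/-- β is strongly abelian over γ. -/
def StronglyAbelianOver {σ : Signature} {A : Type} (Alg : UAlg σ A)
    (β γ : A → A → Prop) : Prop :=
  ∀ (n m : ℕ) (t : Term σ (n + m)) (a₁ a₂ : Fin n → A) (b₁ b₂ b₃ : Fin m → A),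
    (∀ i, β (a₁ i) (a₂ i)) → (∀ i, β (b₁ i) (b₂ i)) → (∀ i, β (b₂ i) (b₃ i)) →
    γ (t.eval Alg (Fin.append a₁ b₁)) (t.eval Alg (Fin.append a₂ b₂)) →
    γ (t.eval Alg (Fin.append a₁ b₃)) (t.eval Alg (Fin.append a₂ b₃))

/-- The least congruence containing a binary relation. -/
def congClosure {σ : Signature} {A : Type} (Alg : UAlg σ A) (R : A → A → Prop) :
    A → A → Prop :=
  fun a b => ∀ r, IsCongruence Alg r → (∀ x y, R x y → r x y) → r a b

/-- A subset closed under the operations. -/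
def IsSubalgebra {σ : Signature} {A : Type} (Alg : UAlg σ A) (s : Set A) : Prop :=
  ∀ (o : σ.ops) (x : Fin (σ.arity o) → A), (∀ j, x j ∈ s) → Alg.interp o x ∈ s

/-- The power algebra `A^I`. -/
def UAlg.pow {σ : Signature} {A : Type} (Alg : UAlg σ A) (I : Type) :
    UAlg σ (I → A) :=
  ⟨fun o x i => Alg.interp o fun j => x j i⟩

/-- The product of a family of algebras. -/
def UAlg.pi {σ : Signature} {ι : Type} {A : ι → Type} (Alg : ∀ i, UAlg σ (A i)) :
    UAlg σ (∀ i, A i) :=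
  ⟨fun o x i => (Alg i).interp o fun j => x j i⟩

/-- The binary product of two algebras. -/
def UAlg.prod2 {σ : Signature} {A B : Type} (AlgA : UAlg σ A) (AlgB : UAlg σ B) :
    UAlg σ (A × B) :=
  ⟨fun o x => (AlgA.interp o fun j => (x j).1, AlgB.interp o fun j => (x j).2)⟩

/-- The algebra structure on a subalgebra. -/
def UAlg.sub {σ : Signature} {A : Type} (Alg : UAlg σ A) (s : Set A)
    (hs : IsSubalgebra Alg s) : UAlg σ s :=
  ⟨fun o x => ⟨Alg.interp o fun j => (x j : A), hs o _ fun j => (x j).2⟩⟩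

/-- Homomorphisms of algebras. -/
def IsHom {σ : Signature} {A B : Type} (AlgA : UAlg σ A) (AlgB : UAlg σ B)
    (f : A → B) : Prop :=
  ∀ (o : σ.ops) (x : Fin (σ.arity o) → A), f (AlgA.interp o x) = AlgB.interp o (f ∘ x)

/-- An idempotent unary polynomial. -/
def IsIdempotentPoly {σ : Signature} {A : Type} (Alg : UAlg σ A) (e : A → A) : Prop :=
  IsUnaryPolynomial Alg e ∧ ∀ x, e (e x) = e x

/-- A (⊥, δ)-minimal set. -/
def IsMinimalSet {σ : Signature} {A : Type} (Alg : UAlg σ A) (δ : A → A → Prop)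
    (U : Set A) : Prop :=
  (∃ e, IsIdempotentPoly Alg e ∧ U = Set.range e ∧ ∃ a b, δ a b ∧ e a ≠ e b) ∧
  ∀ e', IsIdempotentPoly Alg e' → Set.range e' ⊆ U → (∃ a b, δ a b ∧ e' a ≠ e' b) →
    Set.range e' = U

/-- μ is an atom of the congruence lattice. -/
def IsAtomCong {σ : Signature} {A : Type} (Alg : UAlg σ A) (μ : A → A → Prop) : Prop :=
  IsCongruence Alg μ ∧ μ ≠ (fun a b => a = b) ∧
  ∀ θ, IsCongruence Alg θ → (∀ a b, θ a b → μ a b) → θ = (fun a b => a = b) ∨ θ = μ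

/-- A (⊥, μ)-trace in a minimal set U. -/
def IsTrace {A : Type} (μ : A → A → Prop) (U N : Set A) : Prop :=
  (∃ a ∈ U, N = {x ∈ U | μ x a}) ∧ ∃ x ∈ N, ∃ y ∈ N, x ≠ y

/-- The body of a minimal set: the union of its traces. -/
def Body {A : Type} (μ : A → A → Prop) (U : Set A) : Set A :=
  {x | ∃ N, IsTrace μ U N ∧ x ∈ N}

/-- Polynomial permutations of U (as functions A → A which are bijective on U). -/
def PolPermFun {σ : Signature} {A : Type} (Alg : UAlg σ A) (U : Set A) : Set (A → A) :=
  { p | IsUnaryPolynomial Alg p ∧ Set.BijOn p U U }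

/-- Subdirect irreducibility: there is a pair contained in every nontrivial congruence. -/
def IsSI {σ : Signature} {B : Type} (Alg : UAlg σ B) : Prop :=
  ∃ a b : B, a ≠ b ∧ ∀ θ, IsCongruence Alg θ → θ ≠ (fun x y => x = y) → θ a b

/-- The subalgebra generated by a set. -/
def genSub {σ : Signature} {B : Type} (Alg : UAlg σ B) (s : Set B) : Set B :=
  ⋂₀ {t | IsSubalgebra Alg t ∧ s ⊆ t}

/-- A strongly solvable congruence: connected to ⊥ by strongly abelian covers. -/
def IsStronglySolvable {σ : Signature} {A : Type} (Alg : UAlg σ A)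
    (s : A → A → Prop) : Prop :=
  ∃ (n : ℕ) (c : Fin (n + 1) → (A → A → Prop)),
    c 0 = (fun a b => a = b) ∧ c (Fin.last n) = s ∧
    (∀ i, IsCongruence Alg (c i)) ∧
    ∀ i : Fin n, (∀ a b, c i.castSucc a b → c i.succ a b) ∧
      StronglyAbelianOver Alg (c i.succ) (c i.castSucc)

/-- The set of n-ary term operations of an algebra. -/
def TermFun {σ : Signature} {A : Type} (Alg : UAlg σ A) (n : ℕ) :
    Set ((Fin n → A) → A) :=
  { g | ∃ t : Term σ n, g = fun v => t.eval Alg v }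

/-- A finite abelian group Q that is subdirectly irreducible as a module
over a ring R of endomorphisms of Q satisfies |Q| ≤ |R|. -/
theorem stmt_7 {Q : Type} [AddCommGroup Q] [Fintype Q]
    (R : Subring (AddMonoid.End Q))
    (hSI : ∃ S₀ : AddSubgroup Q, S₀ ≠ ⊥ ∧ (∀ f ∈ R, ∀ x ∈ S₀, f x ∈ S₀) ∧
      ∀ S : AddSubgroup Q, (∀ f ∈ R, ∀ x ∈ S, f x ∈ S) → S ≠ ⊥ → S₀ ≤ S) :
    Fintype.card Q ≤ Nat.card R := by
  classical
  haveI hfinEnd : Finite (AddMonoid.End Q) :=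
    Finite.of_injective (fun f => (f : Q → Q)) DFunLike.coe_injective
  haveI hfinR : Finite ↥R := Subtype.finite
  haveI hneR : Nonempty ↥R := ⟨1⟩
  obtain ⟨S₀, hS₀ne, _hS₀inv, hS₀min⟩ := hSI
  -- pick a nonzero element of the monolith
  obtain ⟨s₀, hs₀S, hs₀ne⟩ : ∃ s ∈ S₀, s ≠ 0 := by
    by_contra h
    push_neg at h
    exact hS₀ne ((AddSubgroup.eq_bot_iff_forall _).2 h)
  -- pick a character not vanishing at s₀
  obtain ⟨χ₀, hχ₀⟩ : ∃ ψ : AddChar Q ℂ, ψ s₀ ≠ 1 := AddChar.exists_apply_ne_zero.2 hs₀ne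
  -- the map r ↦ χ₀ ∘ r
  let Φ : ↥R →+ AddChar Q ℂ :=
    { toFun := fun r => χ₀.compAddMonoidHom (r : AddMonoid.End Q)
      map_zero' := by
        ext x
        show χ₀ ((0 : AddMonoid.End Q) x) = 1
        simp
      map_add' := by
        intro r s
        ext x
        show χ₀ (((r : AddMonoid.End Q) + (s : AddMonoid.End Q)) x) = _
        rw [show ((r : AddMonoid.End Q) + (s : AddMonoid.End Q)) x
            = (r : AddMonoid.End Q) x + (s : AddMonoid.End Q) x from rfl,
          χ₀.map_add_eq_mul]
        rfl }
  have hΦsurj : Function.Surjective Φ := by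
    by_contra hns
    have hN : Φ.range ≠ ⊤ := fun h => hns (AddMonoidHom.range_eq_top.1 h)
    obtain ⟨ψ, hψ⟩ : ∃ ψ : AddChar Q ℂ, ψ ∉ Φ.range := by
      by_contra h
      push_neg at h
      exact hN (by ext x; simpa using h x)
    -- a character of the dual vanishing on the range but not trivial
    set π := QuotientAddGroup.mk' Φ.range with hπ
    have hπψ : π ψ ≠ 0 := by
      simpa [π, QuotientAddGroup.eq_zero_iff] using hψ
    obtain ⟨Θ', hΘ'⟩ : ∃ χ : AddChar (AddChar Q ℂ ⧸ Φ.range) ℂ, χ (π ψ) ≠ 1 :=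
      AddChar.exists_apply_ne_zero.2 hπψ
    set Θ : AddChar (AddChar Q ℂ) ℂ := Θ'.compAddMonoidHom π with hΘ
    -- Θ comes from an element of Q by Pontryagin duality
    obtain ⟨q, hq⟩ := AddChar.doubleDualEmb_bijective.surjective Θ
    have hqne : q ≠ 0 := by
      intro h0
      apply hΘ'
      have : Θ ψ = 1 := by
        rw [← hq] at *
        rw [h0] at *
        simp only [map_zero] at *
        exact AddChar.zero_apply _
      simpa [Θ] using this
    -- the R-orbit of q
    let ev : ↥R →+ Q :=
      { toFun := fun r => (r : AddMonoid.End Q) q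
        map_zero' := rfl
        map_add' := fun r s => rfl }
    have hSinv : ∀ f ∈ R, ∀ x ∈ ev.range, f x ∈ ev.range := by
      rintro f hf x ⟨r, rfl⟩
      exact ⟨⟨f, hf⟩ * r, rfl⟩
    have hSne : ev.range ≠ ⊥ := by
      intro h
      apply hqne
      have hqmem : q ∈ ev.range := ⟨(1 : ↥R), rfl⟩
      rw [h] at hqmem
      simpa using hqmem
    have hle := hS₀min ev.range hSinv hSne
    obtain ⟨r, hr⟩ : ∃ r : ↥R, (r : AddMonoid.End Q) q = s₀ := hle hs₀S
    -- but Θ kills the range of Φ, giving χ₀ s₀ = 1, contradiction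
    have h1 : Θ (Φ r) = 1 := by
      have : π (Φ r) = 0 := (QuotientAddGroup.eq_zero_iff _).2 ⟨r, rfl⟩
      simp [Θ, this]
    have h2 : Θ (Φ r) = χ₀ s₀ := by
      rw [← hq]
      exact congrArg χ₀ hr
    exact hχ₀ (h2.symm.trans h1)
  calc Fintype.card Q = Fintype.card (AddChar Q ℂ) := AddChar.card_eq.symm
    _ = Nat.card (AddChar Q ℂ) := (Nat.card_eq_fintype_card).symm
    _ ≤ Nat.card ↥R := Nat.card_le_card_of_surjective Φ hΦsurj
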